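/- arXiv:2007.05269 — 3 statements merged into one kernel-verified Lean document; each statement's English description precedes it below -/
import Mathlib

section
/- Monotonicity of pr: for every sequence of channel actions σ over Σ and all words x, x', if x ⊑ x' then pr[σ](x) ⊑ pr[σ](x'). -/
open List
/-- `wpow u k` is the word `u` concatenated `k` times. -/
def wpow {β : Type*} (u : List β) (k : ℕ) : List β := (List.replicate k u).flatten

/-- Auxiliary residual operation, working on reversed words. -/
def resAux {α : Type*} [DecidableEq α] : List α → List α → List α
  | xr, [] => xr
  | [], _ :: _ => []
  | a :: xr, b :: vr => if a = b then resAux xr vr else resAux (a :: xr) vr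
termination_by xr vr => vr.length

/-- The residual `x / v`: the prefix of `x` obtained by removing from `x`
its longest suffix that is a subword of `v`. -/
def res {α : Type*} [DecidableEq α] (x v : List α) : List α :=
  (resAux x.reverse v.reverse).reverse

inductive Act (α : Type*) where
  | write : List α → Act α
  | read : List α → Act α

/-- written part -/
def wri {α : Type*} : List (Act α) → List α
  | [] => []
  | Act.write w :: σ => w ++ wri σ
  | Act.read _ :: σ => wri σ

/-- read part -/
def rea {α : Type*} : List (Act α) → List α
  | [] => []
  | Act.write _ :: σ => rea σ
  | Act.read w :: σ => w ++ rea σ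

/-- `pr σ x` : minimal `σ`-predecessor of `x` (processing `σ` right-to-left). -/
def pr {α : Type*} [DecidableEq α] : List (Act α) → List α → List α
  | [], x => x
  | Act.write v :: σ, x => res (pr σ x) v
  | Act.read u :: σ, x => u ++ pr σ x

/-- lossy step for a single channel action -/
def stepAct {α : Type*} : Act α → List α → List α → Prop
  | Act.write w, x, y => y <+ x ++ w
  | Act.read w, x, y => w ++ y <+ x

/-- lossy steps along a sequence of channel actions -/
def steps {α : Type*} : List (Act α) → List α → List α → Prop
  | [], x, y => x = y
  | θ :: σ, x, y => ∃ z, stepAct θ x z ∧ steps σ z y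

/-- `w` is a fractional power of `u` -/
def FracPow {α : Type*} (u w : List α) : Prop := ∃ k : ℕ, w <+: wpow u k

/-- `x ⊖ u` : remainder of `x` after reading the leftmost embedding of `u`. -/
def ominus {α : Type*} [DecidableEq α] : List α → List α → List α
  | x, [] => x
  | [], _ :: _ => []
  | a :: x, b :: u => if a = b then ominus x u else ominus x (b :: u)

/-- `σ` is increasing -/
def Increasing {α : Type*} (σ : List (Act α)) : Prop :=
  0 < (wri σ).length ∧
    wpow (rea σ) (wri σ).length <+ wpow (wri σ) ((wri σ).length - 1)


lemma resAux_mono {α : Type*} [DecidableEq α] :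
    ∀ (vr xr xr' : List α), xr <+ xr' → resAux xr vr <+ resAux xr' vr := by
  intro vr
  induction vr with
  | nil => intro xr xr' h; simpa [resAux] using h
  | cons b vr ih =>
    intro xr xr' h
    match xr', xr, h with
    | [], [], _ => simp [resAux]
    | a' :: t', [], _ => simp [resAux]
    | a' :: t', a :: t, h =>
      cases h with
      | cons _ h =>
        -- a :: t <+ t'
        simp only [resAux]
        by_cases hb' : a' = b
        · simp only [hb']
          by_cases hb : a = b
          · simp only [hb, if_pos rfl]
            exact ih _ _ (List.Sublist.trans (List.sublist_cons_self a t) h)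
          · simp only [if_neg hb, if_pos rfl]
            exact ih _ _ h
        · simp only [if_neg hb']
          by_cases hb : a = b
          · simp only [hb, if_pos rfl]
            exact ih _ _ ((List.Sublist.trans (List.sublist_cons_self a t) h).trans
              (List.sublist_cons_self a' t'))
          · simp only [if_neg hb]
            exact ih _ _ (h.trans (List.sublist_cons_self a' t'))
      | cons_cons _ h =>
        -- same head, t <+ t'
        simp only [resAux]
        by_cases hb : a' = b
        · simp only [if_pos hb]
          exact ih _ _ h
        · simp only [if_neg hb]
          exact ih _ _ (h.cons₂ a')

lemma res_mono {α : Type*} [DecidableEq α] {x x' : List α} (v : List α)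
    (h : x <+ x') : res x v <+ res x' v := by
  unfold res
  exact (resAux_mono v.reverse x.reverse x'.reverse (h.reverse)).reverse

/-- monotonicity of `pr`. -/
theorem pr_mono {α : Type*} [DecidableEq α]
    (σ : List (Act α)) (x x' : List α) (h : x <+ x') :
    pr σ x <+ pr σ x' := by
  induction σ with
  | nil => simpa [pr] using h
  | cons θ σ ih =>
    cases θ with
    | write v => exact res_mono v ih
    | read u => exact List.Sublist.append_left ih u
end

section
/- Let σ be a sequence of channel actions over Σ, u = rea(σ), let x be a fractional power of u, and set y = pr[σ](x). If |y| > |u|, then for every n ∈ ℕ, pr[σ](u^n·x) = u^n·y. -/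
open List
section PumpAux
variable {α : Type*} [DecidableEq α]

lemma resAux_nil_right (xr : List α) : resAux xr [] = xr := by rw [resAux]

lemma resAux_nil_left (b : α) (vr : List α) : resAux [] (b :: vr) = [] := by rw [resAux]

lemma resAux_cons_cons (a b : α) (xr vr : List α) :
    resAux (a :: xr) (b :: vr) = if a = b then resAux xr vr else resAux (a :: xr) vr := by
  rw [resAux]

lemma resAux_suffix (xr vr : List α) : resAux xr vr <:+ xr := by
  induction vr generalizing xr with
  | nil => rw [resAux_nil_right]
  | cons b vr ih =>
    cases xr with
    | nil => rw [resAux_nil_left]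
    | cons a xr' =>
      rw [resAux_cons_cons]
      split
      · exact (ih xr').trans (suffix_cons _ _)
      · exact ih (a :: xr')

lemma resAux_append_of_ne_nil (xr vr w : List α) (h : resAux xr vr ≠ []) :
    resAux (xr ++ w) vr = resAux xr vr ++ w := by
  induction vr generalizing xr with
  | nil => rw [resAux_nil_right, resAux_nil_right]
  | cons b vr ih =>
    cases xr with
    | nil => exact absurd (resAux_nil_left b vr) h
    | cons a xr' =>
      rw [resAux_cons_cons] at h ⊢
      rw [cons_append, resAux_cons_cons]
      split
      · have h' : resAux xr' vr ≠ [] := by simpa [*] using h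
        exact ih xr' h'
      · have h' : resAux (a :: xr') vr ≠ [] := by simpa [*] using h
        rw [← cons_append]
        exact ih (a :: xr') h'

lemma resAux_append_of_eq_nil (xr vr w : List α) (h : resAux xr vr = []) :
    resAux (xr ++ w) vr <:+ w := by
  induction vr generalizing xr with
  | nil =>
    rw [resAux_nil_right] at h
    subst h
    rw [nil_append, resAux_nil_right]
  | cons b vr ih =>
    cases xr with
    | nil => rw [nil_append]; exact resAux_suffix w (b :: vr)
    | cons a xr' =>
      rw [resAux_cons_cons] at h
      rw [cons_append, resAux_cons_cons]
      split
      · exact ih xr' (by simpa [*] using h)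
      · rw [← cons_append]
        exact ih (a :: xr') (by simpa [*] using h)

lemma res_prefix (x v : List α) : res x v <+: x := by
  have := resAux_suffix x.reverse v.reverse
  have h2 : (resAux x.reverse v.reverse).reverse <+: x.reverse.reverse :=
    reverse_prefix.mpr this
  simpa [res] using h2

lemma res_append_of_ne_nil (A B v : List α) (h : res B v ≠ []) :
    res (A ++ B) v = A ++ res B v := by
  have h' : resAux B.reverse v.reverse ≠ [] := by
    intro hc; apply h; rw [res, hc, reverse_nil]
  rw [res, reverse_append, resAux_append_of_ne_nil _ _ _ h', reverse_append,
    reverse_reverse, res]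

lemma res_append_of_eq_nil (A B v : List α) (h : res B v = []) :
    res (A ++ B) v <+: A := by
  have h' : resAux B.reverse v.reverse = [] := by
    have := congrArg List.reverse h
    rwa [res, reverse_reverse, reverse_nil] at this
  have := resAux_append_of_eq_nil B.reverse v.reverse A.reverse h'
  have h2 : (resAux (B.reverse ++ A.reverse) v.reverse).reverse <+: A.reverse.reverse :=
    reverse_prefix.mpr this
  simpa [res, reverse_append] using h2

lemma wpow_comm (u : List α) (n : ℕ) : u ++ wpow u n = wpow u n ++ u := by
  induction n with
  | zero => simp [wpow]
  | succ n ih =>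
    have h1 : wpow u (n + 1) = u ++ wpow u n := by
      rw [wpow, replicate_succ, flatten_cons]; rfl
    rw [h1, ih, ← append_assoc, ih]

lemma pr_dichotomy (σ : List (Act α)) (x : List α) :
    (pr σ x <+: rea σ) ∨
    (∃ B : List α, B ≠ [] ∧ pr σ x = rea σ ++ B ∧
      ∀ w : List α, pr σ (w ++ x) = rea σ ++ w ++ B) := by
  induction σ with
  | nil =>
    cases x with
    | nil => left; simp [pr, rea]
    | cons a x' =>
      right
      exact ⟨a :: x', by simp, by simp [pr, rea], fun w => by simp [pr, rea]⟩
  | cons θ σ' ih =>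
    cases θ with
    | read u =>
      rcases ih with hl | ⟨B, hB, h1, h2⟩
      · left
        show u ++ pr σ' x <+: u ++ rea σ'
        obtain ⟨t, ht⟩ := hl
        exact ⟨t, by rw [append_assoc, ht]⟩
      · right
        refine ⟨B, hB, ?_, fun w => ?_⟩
        · show u ++ pr σ' x = (u ++ rea σ') ++ B
          rw [h1, append_assoc]
        · show u ++ pr σ' (w ++ x) = (u ++ rea σ') ++ w ++ B
          rw [h2 w]; simp [append_assoc]
    | write v =>
      rcases ih with hl | ⟨B, hB, h1, h2⟩
      · left
        exact (res_prefix (pr σ' x) v).trans hl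
      · by_cases hres : res B v = []
        · left
          show res (pr σ' x) v <+: rea σ'
          rw [h1]
          exact res_append_of_eq_nil _ _ _ hres
        · right
          refine ⟨res B v, hres, ?_, fun w => ?_⟩
          · show res (pr σ' x) v = rea σ' ++ res B v
            rw [h1, res_append_of_ne_nil _ _ _ hres]
          · show res (pr σ' (w ++ x)) v = rea σ' ++ w ++ res B v
            rw [h2 w]
            exact res_append_of_ne_nil _ _ _ hres

end PumpAux

/-- if `x` is a fractional power of `u = rea(σ)`, `y = pr[σ](x)` and
`|y| > |u|`, then `pr[σ](uⁿ·x) = uⁿ·y` for every `n`. -/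
theorem pr_pump_up {α : Type*} [DecidableEq α]
    (σ : List (Act α)) (x : List α) (h : FracPow (rea σ) x)
    (hy : (rea σ).length < (pr σ x).length) (n : ℕ) :
    pr σ (wpow (rea σ) n ++ x) = wpow (rea σ) n ++ pr σ x := by
  rcases pr_dichotomy σ x with hl | ⟨B, hB, h1, h2⟩
  · exact absurd hl.length_le (by omega)
  · rw [h2 (wpow (rea σ) n), h1, wpow_comm, append_assoc]
end

section
/- Tightness of the iteration-number bound: let a and b be two distinct letters, let n, m ∈ ℕ, let σ be the two-action sequence consisting of the write !(a·b^{n+1}) followed by the read ?(b^n), and let x = a^m. Then the least L ∈ ℕ for which there exists ℓ ≤ L with pr[σ^ℓ](x) ⊑ pr[σ^{L+1}](x) is exactly L = m·(n+1). -/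
open List
section Aux
variable {α : Type*} [DecidableEq α]

lemma resAux_nil (xr : List α) : resAux xr ([] : List α) = xr := by
  cases xr <;> simp [resAux]

lemma resAux_skip (c : α) (t vr' vr : List α) (h : c ∉ vr') :
    resAux (c :: t) (vr' ++ vr) = resAux (c :: t) vr := by
  induction vr' with
  | nil => simp
  | cons d vr' ih =>
      simp only [List.mem_cons, not_or] at h
      simpa [resAux, h.1] using ih h.2

lemma resAux_match (u t vr : List α) : resAux (u ++ t) (u ++ vr) = resAux t vr := by
  induction u with
  | nil => rfl
  | cons d u ih => simpa [resAux] using ih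

lemma pr_append (s t : List (Act α)) (x : List α) :
    pr (s ++ t) x = pr s (pr t x) := by
  induction s with
  | nil => rfl
  | cons θ s ih => cases θ <;> simp [pr, ih]

lemma wpow_succ {β : Type*} (u : List β) (k : ℕ) : wpow u (k + 1) = u ++ wpow u k := by
  simp [wpow, List.replicate_succ]

lemma rep_add (c : α) (p q : ℕ) :
    List.replicate p c ++ List.replicate q c = List.replicate (p + q) c :=
  (List.replicate_add p q c).symm

lemma step1 (a b : α) (hab : a ≠ b) (n k j : ℕ) :
    pr [Act.write (a :: List.replicate (n + 1) b), Act.read (List.replicate n b)]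
      (List.replicate k b ++ List.replicate (j + 1) a)
    = List.replicate (n + k) b ++ List.replicate j a := by
  have hx : (List.replicate n b ++ (List.replicate k b ++ List.replicate (j + 1) a)).reverse
      = a :: (List.replicate j a ++ List.replicate (n + k) b) := by
    rw [List.reverse_append, List.reverse_append, List.reverse_replicate,
      List.reverse_replicate, List.reverse_replicate, List.append_assoc, rep_add,
      Nat.add_comm k n, List.replicate_succ]
    simp
  have hv : (a :: List.replicate (n + 1) b).reverse = List.replicate (n + 1) b ++ [a] := by
    simp [List.reverse_replicate]
  simp only [pr, res, hx, hv]
  rw [resAux_skip a _ (List.replicate (n+1) b) [a] (by simp [hab])]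
  rw [show ([a] : List α) = [a] ++ [] from rfl,
      show (a :: (List.replicate j a ++ List.replicate (n + k) b))
        = [a] ++ (List.replicate j a ++ List.replicate (n + k) b) from rfl,
      resAux_match, resAux_nil]
  simp [List.reverse_replicate]

lemma step2 (a b : α) (hab : a ≠ b) (n k : ℕ) :
    pr [Act.write (a :: List.replicate (n + 1) b), Act.read (List.replicate n b)]
      (List.replicate k b)
    = List.replicate (k - 1) b := by
  have hv : (a :: List.replicate (n + 1) b).reverse = List.replicate (n + 1) b ++ [a] := by
    simp [List.reverse_replicate]
  simp only [pr, res, hv]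
  cases k with
  | zero =>
      have hx : (List.replicate n b ++ (List.replicate 0 b : List α)).reverse
          = List.replicate n b ++ ([] : List α) := by simp [List.reverse_replicate]
      rw [hx]
      rw [show List.replicate (n+1) b ++ [a] = List.replicate n b ++ (b :: [a]) by
        simp [List.replicate_succ', List.append_assoc]]
      rw [resAux_match]
      rcases n with _|_
      all_goals simp [resAux]
  | succ k =>
      have hx : (List.replicate n b ++ (List.replicate (k+1) b : List α)).reverse
          = List.replicate (n + 1) b ++ List.replicate k b := by
        rw [List.reverse_append, List.reverse_replicate, List.reverse_replicate,
          rep_add, rep_add, show k + 1 + n = n + 1 + k by omega]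
      rw [hx, ← show List.replicate (n+1) b ++ ([a] ++ []) = List.replicate (n+1) b ++ [a] by simp,
        resAux_match]
      cases k with
      | zero => simp [resAux]
      | succ k =>
          simp only [List.replicate_succ]
          rw [resAux_skip b _ [a] [] (by simp [(Ne.symm hab)]), resAux_nil]
          simp [List.reverse_replicate]
          rw [List.replicate_succ']

lemma iter1 (a b : α) (hab : a ≠ b) (n m ℓ : ℕ) (h : ℓ ≤ m) :
    pr (wpow [Act.write (a :: List.replicate (n + 1) b), Act.read (List.replicate n b)] ℓ)
      (List.replicate m a)
    = List.replicate (n * ℓ) b ++ List.replicate (m - ℓ) a := by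
  induction ℓ with
  | zero => simp [wpow, pr]
  | succ ℓ ih =>
      rw [wpow_succ, pr_append, ih (by omega)]
      have h1 : m - ℓ = (m - (ℓ + 1)) + 1 := by omega
      rw [h1, step1 a b hab n]
      have h2 : n + n * ℓ = n * (ℓ + 1) := by ring
      rw [h2]

lemma iter2 (a b : α) (hab : a ≠ b) (n m i : ℕ) :
    pr (wpow [Act.write (a :: List.replicate (n + 1) b), Act.read (List.replicate n b)] (m + i))
      (List.replicate m a)
    = List.replicate (n * m - i) b := by
  induction i with
  | zero => simpa using iter1 a b hab n m m le_rfl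
  | succ i ih =>
      rw [show m + (i+1) = (m+i) + 1 by omega, wpow_succ, pr_append, ih, step2 a b hab n]
      congr 1

end Aux

/-- tightness of the iteration-number bound: for
`σ = !(a·b^{n+1}) ?(b^n)` and `x = a^m`, the iteration number is exactly
`m·(n+1)`. -/
theorem iteration_number_tight {α : Type*} [DecidableEq α]
    (a b : α) (hab : a ≠ b) (n m : ℕ)
    (σ : List (Act α))
    (hσ : σ = [Act.write (a :: List.replicate (n + 1) b),
               Act.read (List.replicate n b)])
    (x : List α) (hx : x = List.replicate m a) :
    IsLeast {L : ℕ | ∃ ℓ ≤ L, pr (wpow σ ℓ) x <+ pr (wpow σ (L + 1)) x}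
      (m * (n + 1)) := by
  subst hσ hx
  constructor
  · refine ⟨m * (n + 1), le_rfl, ?_⟩
    have h1 := iter2 a b hab n m (m * n)
    rw [show m + m * n = m * (n + 1) by ring] at h1
    rw [h1, show n * m - m * n = 0 by rw [Nat.mul_comm]; omega]
    simp
  · rintro L ⟨ℓ, hℓL, hsub⟩
    by_contra hLt
    push_neg at hLt
    have hnm : m * (n + 1) = n * m + m := by ring
    rw [hnm] at hLt
    by_cases hcase : ℓ < m
    · -- count of a
      have hcnt := hsub.count_le a
      rw [iter1 a b hab n m ℓ (le_of_lt hcase)] at hcnt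
      by_cases h2 : L + 1 ≤ m
      · rw [iter1 a b hab n m (L+1) h2] at hcnt
        simp [List.count_replicate, hab, Ne.symm hab] at hcnt
        omega
      · have := iter2 a b hab n m (L + 1 - m)
        rw [show m + (L + 1 - m) = L + 1 by omega] at this
        rw [this] at hcnt
        simp [List.count_replicate, hab, Ne.symm hab] at hcnt
        omega
    · push_neg at hcase
      have hlen := hsub.length_le
      have e1 := iter2 a b hab n m (ℓ - m)
      rw [show m + (ℓ - m) = ℓ by omega] at e1
      have e2 := iter2 a b hab n m (L + 1 - m)
      rw [show m + (L + 1 - m) = L + 1 by omega] at e2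
      rw [e1, e2] at hlen
      simp only [List.length_replicate] at hlen
      omega
end
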